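/- Let δ be a dissimilarity map on X, |X| = n ≥ 5, quartet consistent with a binary phylogenetic X-tree T. If (i,k) is a cherry of T and j ∈ X is distinct from i and k, then Z_δ(i,k) - Z_δ(i,j) = ((n-1)/3) · ∑_{x ∈ X\{i,j,k}} (w_δ(ik:xj) - w_δ(ij:xk)) (with Z scaled by C(n-1,2)), and this quantity is strictly positive. In particular, if i belongs to a cherry of T, then any pair containing i that maximizes the scaled Z-criterion must be the cherry of T containing i. -/

import Mathlib

open Finset
open scoped Classical

/-- `w_δ(ij:kl) = (1/2)(δ(i,k)+δ(i,l)+δ(j,k)+δ(j,l)) - δ(i,j) - δ(k,l)`. -/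
noncomputable def njw {X : Type*} (δ : X → X → ℝ) (i j k l : X) : ℝ :=
  (δ i k + δ i l + δ j k + δ j l) / 2 - δ i j - δ k l

/-- Edge `e` (with split side `σ e`) separates the pair `p,q` from the pair `r,s`. -/
def sepE {X E : Type*} (σ : E → Finset X) (e : E) (p q r s : X) : Prop :=
  (p ∈ σ e ∧ q ∈ σ e ∧ r ∉ σ e ∧ s ∉ σ e) ∨
  (p ∉ σ e ∧ q ∉ σ e ∧ r ∈ σ e ∧ s ∈ σ e)

/-- `(ij:kl)` is a quartet of the tree encoded by the split system `σ`:
some internal edge separates `{i,j}` from `{k,l}`. -/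
def isQuartet {X E : Type*} (σ : E → Finset X) (i j k l : X) : Prop :=
  ∃ e, sepE σ e i j k l

/-- Pairwise compatibility of the splits: the condition under which a split system
is exactly the split system of a (phylogenetic) tree. -/
def splitsCompatible {X E : Type*} [Fintype X] (σ : E → Finset X) : Prop :=
  ∀ e f, σ e ⊆ σ f ∨ σ f ⊆ σ e ∨ (∀ a, a ∈ σ e → a ∉ σ f) ∨ (∀ a, a ∈ σ e ∨ a ∈ σ f)

/-- A dissimilarity map `δ` is quartet consistent with the tree encoded by `σ`. -/
def quartetConsistent {X E : Type*} (σ : E → Finset X) (δ : X → X → ℝ) : Prop :=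
  ∀ i j k l : X, i ≠ j → i ≠ k → i ≠ l → j ≠ k → j ≠ l → k ≠ l →
    isQuartet σ i j k l →
      njw δ i j k l > max (njw δ i k j l) (njw δ i l j k)

/-- The scaled Z-criterion `Z_δ(i,j) = ∑_{{k,l} ⊆ X\{i,j}} w_δ(ij:kl)`
(sum over unordered pairs, written as half the sum over ordered pairs). -/
noncomputable def njZ {X : Type*} [Fintype X] [DecidableEq X]
    (δ : X → X → ℝ) (i j : X) : ℝ :=
  (1 / 2) * ∑ k ∈ (Finset.univ.erase i).erase j,
    ∑ l ∈ ((Finset.univ.erase i).erase j).erase k, njw δ i j k l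

/-- `(x,y)` is a cherry of the tree encoded by `σ`: some edge induces the split
`{x,y} | X \ {x,y}`. -/
def isCherry {X E : Type*} [Fintype X] [DecidableEq X]
    (σ : E → Finset X) (x y : X) : Prop :=
  x ≠ y ∧ ∃ e, σ e = {x, y} ∨ σ e = ({x, y} : Finset X)ᶜ

/-- if `δ` is quartet consistent with the tree `σ`, `(i,k)` is a cherry,
and `j ∉ {i,k}`, then (with the scaled Z-criterion and `n = |X| ≥ 5`)
`Z(i,k) - Z(i,j) = ((n-1)/3) ∑_{x ∈ X\{i,j,k}} (w(ik:xj) - w(ij:xk)) > 0`;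
in particular any Z-maximizing pair containing `i` is the cherry containing `i`. -/
theorem statement_8 {X E : Type*} [Fintype X] [DecidableEq X]
    (hn : 5 ≤ Fintype.card X)
    (σ : E → Finset X)
    (hcompat : splitsCompatible σ)
    (hnontriv : ∀ e, (σ e).Nonempty ∧ σ e ≠ Finset.univ)
    (δ : X → X → ℝ)
    (hsym : ∀ x y, δ x y = δ y x) (hdiag : ∀ x, δ x x = 0)
    (hqc : quartetConsistent σ δ)
    (i k : X) (hcherry : isCherry σ i k) :
    ∀ j : X, j ≠ i → j ≠ k →
      (njZ δ i k - njZ δ i j =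
        (((Fintype.card X : ℝ) - 1) / 3) *
          ∑ x ∈ ((Finset.univ.erase i).erase j).erase k,
            (njw δ i k x j - njw δ i j x k)) ∧
      0 < njZ δ i k - njZ δ i j := by
  intro j hji hjk
  obtain ⟨hik, e, he⟩ := hcherry
  have hkj : k ≠ j := fun h => hjk h.symm
  have hki : k ≠ i := fun h => hik h.symm
  have hij : i ≠ j := fun h => hji h.symm
  set S : Finset X := ((Finset.univ.erase i).erase j).erase k with hS
  set f : X → ℝ := fun x => njw δ i k x j - njw δ i j x k with hf
  set T : ℝ := ∑ x ∈ S, f x with hT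
  set n : ℕ := Fintype.card X with hncard
  have hjA : j ∈ (Finset.univ.erase i).erase k := by
    simp [Finset.mem_erase, hji, hjk]
  have hkB : k ∈ (Finset.univ.erase i).erase j := by
    simp [Finset.mem_erase, hki, hkj]
  have hScard : S.card = n - 3 := by
    rw [hS, Finset.card_erase_of_mem hkB,
      Finset.card_erase_of_mem (by simp [hji] : j ∈ Finset.univ.erase i),
      Finset.card_erase_of_mem (Finset.mem_univ i), Finset.card_univ]
    omega
  have hn5 : 5 ≤ n := hn
  have hmemS : ∀ x ∈ S, x ≠ i ∧ x ≠ j ∧ x ≠ k := by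
    intro x hx
    simp only [hS, Finset.mem_erase] at hx
    exact ⟨hx.2.2.1, hx.2.1, hx.1⟩
  -- positivity of each f x
  have hfpos : ∀ x ∈ S, 0 < f x := by
    intro x hx
    obtain ⟨hxi, hxj, hxk⟩ := hmemS x hx
    have hquart : isQuartet σ i k x j := by
      refine ⟨e, ?_⟩
      rcases he with he | he
      · left
        rw [he]
        refine ⟨?_, ?_, ?_, ?_⟩ <;> simp [hxi, hxk, hji, hjk]
      · right
        rw [he]
        refine ⟨?_, ?_, ?_, ?_⟩ <;> simp [hxi, hxk, hji, hjk]
    have h := hqc i k x j hik (Ne.symm hxi) hij hxk.symm.symm.symm hkj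
      (fun h' => hxj h') hquart
    have hEq : njw δ i j k x = njw δ i j x k := by
      simp only [njw]; rw [hsym k x]; ring
    have hle := le_max_right (njw δ i x k j) (njw δ i j k x)
    simp only [hf]
    linarith
  -- algebraic pointwise identities
  have hW1 : ∀ q, njw δ i k j q = njw δ i k q j := by
    intro q; simp only [njw]; rw [hsym j q]; ring
  have hW2 : ∀ q, njw δ i j k q = njw δ i j q k := by
    intro q; simp only [njw]; rw [hsym k q]; ring
  have hPD : ∀ p q : X, njw δ i k p q - njw δ i j p q = (1/3) * (f p + f q) := by
    intro p q
    simp only [hf, njw]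
    simp only [hsym p j, hsym p k, hsym q j, hsym q k, hsym k j]
    ring
  -- split the Z sums
  have hZik : njZ δ i k = (1/2) *
      (∑ q ∈ S, njw δ i k j q +
        ∑ p ∈ S, (njw δ i k p j + ∑ q ∈ S.erase p, njw δ i k p q)) := by
    rw [njZ]
    congr 1
    rw [← Finset.add_sum_erase _ _ hjA]
    have h1 : ((Finset.univ.erase i).erase k).erase j = S := Finset.erase_right_comm
    rw [h1]
    congr 1
    refine Finset.sum_congr rfl ?_
    intro p hp
    have hpj : p ≠ j := (hmemS p hp).2.1
    have hpA : j ∈ ((Finset.univ.erase i).erase k).erase p :=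
      Finset.mem_erase.2 ⟨hpj.symm, hjA⟩
    rw [← Finset.add_sum_erase _ _ hpA]
    congr 1
    rw [Finset.erase_right_comm, h1]
  have hZij : njZ δ i j = (1/2) *
      (∑ q ∈ S, njw δ i j k q +
        ∑ p ∈ S, (njw δ i j p k + ∑ q ∈ S.erase p, njw δ i j p q)) := by
    rw [njZ]
    congr 1
    rw [← Finset.add_sum_erase _ _ hkB]
    congr 1
    refine Finset.sum_congr rfl ?_
    intro p hp
    have hpk : p ≠ k := (hmemS p hp).2.2
    have hpB : k ∈ ((Finset.univ.erase i).erase j).erase p :=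
      Finset.mem_erase.2 ⟨hpk.symm, hkB⟩
    rw [← Finset.add_sum_erase _ _ hpB]
    congr 1
    rw [Finset.erase_right_comm]
  have hcard1 : 1 ≤ S.card := by omega
  have hmR : ((S.card : ℝ)) = (n : ℝ) - 3 := by
    rw [hScard, Nat.cast_sub (by omega)]; norm_num
  have h1 : ∑ q ∈ S, njw δ i k j q - ∑ q ∈ S, njw δ i j k q = T := by
    rw [← Finset.sum_sub_distrib, hT]
    refine Finset.sum_congr rfl ?_
    intro q _
    rw [hW1, hW2]
  have h2 : ∀ p ∈ S,
      ∑ q ∈ S.erase p, njw δ i k p q - ∑ q ∈ S.erase p, njw δ i j p q =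
        (1/3) * (((S.card : ℝ) - 1) * f p + (T - f p)) := by
    intro p hp
    rw [← Finset.sum_sub_distrib]
    rw [Finset.sum_congr rfl (fun q _ => hPD p q)]
    rw [← Finset.mul_sum, Finset.sum_add_distrib, Finset.sum_const,
      Finset.sum_erase_eq_sub hp, Finset.card_erase_of_mem hp, nsmul_eq_mul,
      Nat.cast_sub hcard1, Nat.cast_one, hT]
  -- assemble
  have hdiff : njZ δ i k - njZ δ i j =
      (1/2) * (T + ∑ p ∈ S, (f p + (1/3) * (((S.card:ℝ) - 1) * f p + (T - f p)))) := by
    rw [hZik, hZij]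
    have e2 : ∑ p ∈ S, (njw δ i k p j + ∑ q ∈ S.erase p, njw δ i k p q)
        - ∑ p ∈ S, (njw δ i j p k + ∑ q ∈ S.erase p, njw δ i j p q)
        = ∑ p ∈ S, (f p + (1/3) * (((S.card:ℝ) - 1) * f p + (T - f p))) := by
      rw [← Finset.sum_sub_distrib]
      refine Finset.sum_congr rfl ?_
      intro p hp
      have h2p := h2 p hp
      simp only [hf]
      simp only [hf] at h2p
      linarith
    linarith [h1, e2]
  have hY : ∑ p ∈ S, (f p + (1/3) * (((S.card:ℝ) - 1) * f p + (T - f p)))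
      = ((2*(S.card:ℝ)+1)/3) * T := by
    have hcongr : ∀ p ∈ S, f p + (1/3) * (((S.card:ℝ) - 1) * f p + (T - f p))
        = ((S.card:ℝ)+1)/3 * f p + T/3 := by
      intro p _; ring
    rw [Finset.sum_congr rfl hcongr, Finset.sum_add_distrib, ← Finset.mul_sum,
      Finset.sum_const, ← hT, nsmul_eq_mul]
    ring
  have hfin : njZ δ i k - njZ δ i j = (((n:ℝ) - 1) / 3) * T := by
    rw [hdiff, hY, hmR]; ring
  have hSne : S.Nonempty := Finset.card_pos.mp (by omega)
  have hTpos : 0 < T := by rw [hT]; exact Finset.sum_pos hfpos hSne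
  have hnR : (5:ℝ) ≤ (n:ℝ) := by exact_mod_cast hn5
  have hpos : 0 < njZ δ i k - njZ δ i j := by
    rw [hfin]
    apply mul_pos _ hTpos
    apply div_pos <;> linarith
  exact ⟨hfin, hpos⟩
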